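/- Let q be a prime power, let c, h, M be positive integers, let γ ∈ [0, 1) be a real number with c < (1 − 2γ)·M/2, and let r_1, r_2 : 𝔽_q → 𝔽_q be functions with Δ(r_1, r_2) ≤ γq. Suppose F(X), G(X) ∈ 𝔽_q[X] with deg(F) < cq and deg(G) < cq are, respectively, an r_1-twisted (h, M)-pseudopolynomial and an r_2-twisted (h, M)-pseudopolynomial, and let k be an integer with k > (M/((1 − 2γ)M − 2c))·(h + 1). Then there exist polynomials A(X), B(X) ∈ 𝔽_q[X], not both zero, each of degree less than Mq and pseudodegree at most k, such that A(X)·F(X) = B(X)·G(X). -/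

import Mathlib

open Polynomial

/-- `A ∈ 𝔽_q[X]` has pseudodegree at most `k`: for every `ℓ ≥ 0`, the remainder of the
`ℓ`-th Hasse derivative of `A` upon division by `Λ(X) = X^q - X` has degree at most `k`. -/
def PdegLE {F : Type*} [Field F] (q : ℕ) (A : F[X]) (k : ℕ) : Prop :=
  ∀ ℓ : ℕ, ((hasseDeriv ℓ A) %ₘ (X ^ q - X)).degree ≤ (k : WithBot ℕ)

/-- `P ∈ 𝔽_q[X]` is an `r`-twisted `(h, M)`-pseudopolynomial: for every `ℓ < M` there is
`U_ℓ ∈ 𝔽_q[X]` of degree at most `h` with `P^{[ℓ]}(α) = r(α)·U_ℓ(α)` for all `α ∈ 𝔽_q`. -/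
def Twisted {F : Type*} [Field F] (r : F → F) (h M : ℕ) (P : F[X]) : Prop :=
  ∀ ℓ < M, ∃ U : F[X], U.degree ≤ (h : WithBot ℕ) ∧
    ∀ α : F, (hasseDeriv ℓ P).eval α = r α * U.eval α

namespace Stmt16Aux

open Finset Module

set_option linter.unusedSectionVars false
set_option maxHeartbeats 1000000

variable {F : Type*} [Field F] [Fintype F]

lemma degree_lam (q : ℕ) (h2 : 2 ≤ q) : (X ^ q - X : F[X]).degree = q := by
  rw [degree_sub_eq_left_of_degree_lt, degree_X_pow]
  rw [degree_X_pow]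
  calc (X : F[X]).degree ≤ 1 := degree_X_le
  _ < (q : WithBot ℕ) := by exact_mod_cast Nat.lt_of_lt_of_le one_lt_two h2

lemma monic_lam (q : ℕ) (h2 : 2 ≤ q) : (X ^ q - X : F[X]).Monic := by
  apply monic_X_pow_sub
  calc (X : F[X]).degree ≤ 1 := degree_X_le
  _ < (q : WithBot ℕ) := by exact_mod_cast Nat.lt_of_lt_of_le one_lt_two h2

lemma taylor_pow' {R : Type*} [CommSemiring R] (r : R) (f : R[X]) (n : ℕ) :
    taylor r (f ^ n) = (taylor r f) ^ n := by
  simpa using map_pow (taylorAlgHom r) f n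

lemma taylor_lam (q : ℕ) (hq : Fintype.card F = q) (α : F) :
    taylor α (X ^ q - X : F[X]) = X ^ q - X := by
  haveI : Fact (Nat.Prime (ringChar F)) := ⟨CharP.char_is_prime F _⟩
  obtain ⟨n, hp, hcard⟩ := FiniteField.card F (ringChar F)
  rw [hq] at hcard
  rw [map_sub, taylor_X, taylor_pow', taylor_X, hcard]
  have hfrob : ((X : F[X]) + C α) ^ (ringChar F) ^ (n : ℕ)
      = X ^ (ringChar F) ^ (n : ℕ) + (C α) ^ (ringChar F) ^ (n : ℕ) :=
    add_pow_char_pow _ _ _ _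
  have hac : α ^ (ringChar F) ^ (n : ℕ) = α := by
    conv_lhs => rw [← hcard, ← hq, FiniteField.pow_card]
  rw [hfrob, ← C_pow, hac]
  ring

lemma lam_dvd_of_eval (q : ℕ) (hq : Fintype.card F = q) {P : F[X]}
    (h : ∀ α : F, P.eval α = 0) : (X ^ q - X : F[X]) ∣ P := by
  have h2 : 2 ≤ q := by rw [← hq]; exact Fintype.one_lt_card
  have hm := monic_lam (F := F) q h2
  rw [← modByMonic_eq_zero_iff_dvd hm]
  have hdeg : (P %ₘ (X ^ q - X)).degree < (X ^ q - X : F[X]).degree :=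
    degree_modByMonic_lt P hm
  rw [degree_lam q h2] at hdeg
  have heval : ∀ α : F, (P %ₘ (X ^ q - X)).eval α = 0 := by
    intro α
    rw [modByMonic_eq_sub_mul_div P (X ^ q - X)]
    have : (α : F) ^ q - α = 0 := by rw [← hq, FiniteField.pow_card, sub_self]
    simp [h α, this]
  apply eq_zero_of_natDegree_lt_card_of_eval_eq_zero _ (Function.injective_id) heval
  rw [hq]
  by_cases hz : P %ₘ (X ^ q - X) = 0
  · rw [hz]; simpa using Nat.lt_of_lt_of_le Nat.zero_lt_two h2
  · exact natDegree_lt_iff_degree_lt hz |>.mpr (by exact_mod_cast hdeg)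

lemma modByMonic_eq_of_eval (q : ℕ) (hq : Fintype.card F = q) {P S : F[X]}
    (h : ∀ α : F, P.eval α = S.eval α) :
    P %ₘ (X ^ q - X) = S %ₘ (X ^ q - X) := by
  have h2 : 2 ≤ q := by rw [← hq]; exact Fintype.one_lt_card
  have : (X ^ q - X : F[X]) ∣ (P - S) := lam_dvd_of_eval q hq (by simp [h])
  have := (modByMonic_eq_zero_iff_dvd (monic_lam q h2)).mpr this
  rw [sub_modByMonic, sub_eq_zero] at this
  exact this

noncomputable def Spoly (q i : ℕ) (a : F[X]) (ℓ : ℕ) : F[X] :=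
  ∑ p ∈ antidiagonal ℓ, ((X ^ q - X : F[X]) ^ i).coeff p.2 • hasseDeriv p.1 a

lemma eval_hasseDeriv_mul_lam_pow (q : ℕ) (hq : Fintype.card F = q)
    (a : F[X]) (i ℓ : ℕ) (α : F) :
    (hasseDeriv ℓ (a * (X ^ q - X) ^ i)).eval α = (Spoly q i a ℓ).eval α := by
  have htl := taylor_lam q hq α
  have h1 : (hasseDeriv ℓ (a * (X ^ q - X) ^ i)).eval α
      = (taylor α (a * (X ^ q - X) ^ i)).coeff ℓ := (taylor_coeff α _ ℓ).symm
  rw [h1, taylor_mul, taylor_pow', htl, coeff_mul]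
  rw [Spoly, eval_finset_sum]
  apply Finset.sum_congr rfl
  intro p hp
  rw [eval_smul, smul_eq_mul, ← taylor_coeff α a p.1, mul_comm]

lemma degree_Spoly_le (q i ℓ : ℕ) {a : F[X]} {k : ℕ} (h : a.degree ≤ (k : WithBot ℕ)) :
    (Spoly q i a ℓ).degree ≤ (k : WithBot ℕ) := by
  refine (degree_sum_le _ _).trans ?_
  rw [Finset.sup_le_iff]
  intro p hp
  refine (degree_smul_le _ _).trans ?_
  rw [degree_le_iff_coeff_zero] at h ⊢
  intro m hm
  rw [hasseDeriv_coeff]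
  have : a.coeff (m + p.1) = 0 := h (m + p.1) (by
    refine lt_of_lt_of_le hm ?_
    exact_mod_cast Nat.le_add_right m p.1)
  simp [this]

lemma blocks_zero (q : ℕ) (h2 : 2 ≤ q) :
    ∀ (n : ℕ) (f : ℕ → F[X]), (∀ i, (f i).degree < (q : WithBot ℕ)) →
      (∑ i ∈ Finset.range n, f i * (X ^ q - X) ^ i) = 0 → ∀ i < n, f i = 0 := by
  intro n
  induction n with
  | zero => intro f _ _ i hi; omega
  | succ n ih =>
    intro f hdeg hsum i hi
    rw [Finset.sum_range_succ'] at hsum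
    have hfac : ∑ i ∈ Finset.range n, f (i + 1) * (X ^ q - X) ^ (i + 1)
        = (∑ i ∈ Finset.range n, f (i + 1) * (X ^ q - X) ^ i) * (X ^ q - X) := by
      rw [Finset.sum_mul]
      apply Finset.sum_congr rfl
      intro j _
      ring
    rw [hfac, pow_zero, mul_one] at hsum
    set G := ∑ i ∈ Finset.range n, f (i + 1) * (X ^ q - X) ^ i with hG
    have hG0 : G = 0 := by
      by_contra hne
      have hd0 : (f 0).degree < (q : WithBot ℕ) := hdeg 0
      have : (G * (X ^ q - X)).degree = G.degree + q := by
        rw [degree_mul, degree_lam q h2]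
      have hf0 : f 0 = -(G * (X ^ q - X)) := by linear_combination hsum
      have hGdeg : (q : WithBot ℕ) ≤ (G * (X ^ q - X)).degree := by
        rw [this]
        have : (0 : WithBot ℕ) ≤ G.degree := Polynomial.zero_le_degree_iff.mpr hne
        calc (q : WithBot ℕ) = 0 + q := by rw [zero_add]
        _ ≤ G.degree + q := by exact add_le_add this le_rfl
      rw [hf0, degree_neg] at hd0
      exact absurd (lt_of_le_of_lt hGdeg hd0) (lt_irrefl _)
    have hf0 : f 0 = 0 := by
      rw [hG0, zero_mul, zero_add] at hsum; exact hsum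
    rcases Nat.eq_zero_or_pos i with rfl | hipos
    · exact hf0
    · obtain ⟨j, rfl⟩ : ∃ j, i = j + 1 := ⟨i - 1, by omega⟩
      exact ih (fun m => f (m + 1)) (fun m => hdeg (m + 1)) hG0 j (by omega)

lemma pow_X_sub_C_dvd (α : F) (M : ℕ) {P : F[X]}
    (h : ∀ ℓ < M, (taylor α P).coeff ℓ = 0) : (X - C α) ^ M ∣ P := by
  have hx : (X : F[X]) ^ M ∣ taylor α P := X_pow_dvd_iff.mpr h
  obtain ⟨g, hg⟩ := hx
  have hPt : P = taylor (-α) (taylor α P) := by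
    rw [taylor_taylor, neg_add_cancel]
    simp
  rw [hPt, hg, taylor_mul]
  have htp : taylor (-α) ((X : F[X]) ^ M) = (X - C α) ^ M := by
    have := map_pow (taylorAlgHom (-α : F)) (X : F[X]) M
    simpa [taylor_X, sub_eq_add_neg] using this
  rw [htp]
  exact Dvd.intro _ rfl

def coefV {n k : ℕ} (v : Fin n → Fin (k + 1) → F) (i j : ℕ) : F :=
  if h : i < n ∧ j < k + 1 then v ⟨i, h.1⟩ ⟨j, h.2⟩ else 0

noncomputable def polv {n k : ℕ} (v : Fin n → Fin (k + 1) → F) (i : ℕ) : F[X] :=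
  ∑ j ∈ Finset.range (k + 1), C (coefV v i j) * X ^ j

noncomputable def Apoly (q : ℕ) {n k : ℕ} (v : Fin n → Fin (k + 1) → F) : F[X] :=
  ∑ i ∈ Finset.range n, polv v i * (X ^ q - X) ^ i

noncomputable def Ahat (q : ℕ) {n k : ℕ} (v : Fin n → Fin (k + 1) → F) (j : ℕ) : F[X] :=
  ∑ i ∈ Finset.range n, Spoly q i (polv v i) j

noncomputable def Rpoly (q : ℕ) {n k : ℕ} (U W : ℕ → F[X])
    (v w : Fin n → Fin (k + 1) → F) (ℓ : ℕ) : F[X] :=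
  ∑ p ∈ antidiagonal ℓ, (Ahat q v p.1 * U p.2 - Ahat q w p.1 * W p.2)

lemma coefV_add {n k : ℕ} (v w : Fin n → Fin (k + 1) → F) (i j : ℕ) :
    coefV (v + w) i j = coefV v i j + coefV w i j := by
  unfold coefV; split <;> simp

lemma coefV_smul {n k : ℕ} (c : F) (v : Fin n → Fin (k + 1) → F) (i j : ℕ) :
    coefV (c • v) i j = c * coefV v i j := by
  unfold coefV; split <;> simp

lemma polv_add {n k : ℕ} (v w : Fin n → Fin (k + 1) → F) (i : ℕ) :
    polv (v + w) i = polv v i + polv w i := by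
  unfold polv
  rw [← Finset.sum_add_distrib]
  exact Finset.sum_congr rfl fun j _ => by rw [coefV_add, C_add, add_mul]

lemma polv_smul {n k : ℕ} (c : F) (v : Fin n → Fin (k + 1) → F) (i : ℕ) :
    polv (c • v) i = c • polv v i := by
  unfold polv
  rw [Finset.smul_sum]
  exact Finset.sum_congr rfl fun j _ => by
    rw [coefV_smul, C_mul, smul_eq_C_mul]; ring

lemma Spoly_add (q i ℓ : ℕ) (a b : F[X]) :
    Spoly q i (a + b) ℓ = Spoly q i a ℓ + Spoly q i b ℓ := by
  unfold Spoly
  rw [← Finset.sum_add_distrib]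
  exact Finset.sum_congr rfl fun p _ => by rw [map_add, smul_add]

lemma Spoly_smul (q i ℓ : ℕ) (c : F) (a : F[X]) :
    Spoly q i (c • a) ℓ = c • Spoly q i a ℓ := by
  unfold Spoly
  rw [Finset.smul_sum]
  exact Finset.sum_congr rfl fun p _ => by
    rw [map_smul, smul_comm]

lemma Ahat_add (q : ℕ) {n k : ℕ} (v w : Fin n → Fin (k + 1) → F) (j : ℕ) :
    Ahat q (v + w) j = Ahat q v j + Ahat q w j := by
  unfold Ahat
  rw [← Finset.sum_add_distrib]
  exact Finset.sum_congr rfl fun i _ => by rw [polv_add, Spoly_add]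

lemma Ahat_smul (q : ℕ) {n k : ℕ} (c : F) (v : Fin n → Fin (k + 1) → F) (j : ℕ) :
    Ahat q (c • v) j = c • Ahat q v j := by
  unfold Ahat
  rw [Finset.smul_sum]
  exact Finset.sum_congr rfl fun i _ => by rw [polv_smul, Spoly_smul]

lemma Rpoly_add (q : ℕ) {n k : ℕ} (U W : ℕ → F[X])
    (v w v' w' : Fin n → Fin (k + 1) → F) (ℓ : ℕ) :
    Rpoly q U W (v + v') (w + w') ℓ = Rpoly q U W v w ℓ + Rpoly q U W v' w' ℓ := by
  unfold Rpoly
  rw [← Finset.sum_add_distrib]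
  refine Finset.sum_congr rfl fun p _ => ?_
  rw [Ahat_add, Ahat_add]
  ring

lemma Rpoly_smul (q : ℕ) {n k : ℕ} (U W : ℕ → F[X]) (c : F)
    (v w : Fin n → Fin (k + 1) → F) (ℓ : ℕ) :
    Rpoly q U W (c • v) (c • w) ℓ = c • Rpoly q U W v w ℓ := by
  unfold Rpoly
  rw [Finset.smul_sum]
  refine Finset.sum_congr rfl fun p _ => ?_
  rw [Ahat_smul, Ahat_smul, smul_sub, smul_mul_assoc, smul_mul_assoc]

lemma degree_polv_le {n k : ℕ} (v : Fin n → Fin (k + 1) → F) (i : ℕ) :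
    (polv v i).degree ≤ (k : WithBot ℕ) := by
  refine (degree_sum_le _ _).trans ?_
  rw [Finset.sup_le_iff]
  intro j hj
  refine (degree_C_mul_X_pow_le _ _).trans ?_
  exact_mod_cast Nat.lt_succ_iff.mp (Finset.mem_range.mp hj)

lemma polv_coeff {n k : ℕ} (v : Fin n → Fin (k + 1) → F) (i j : ℕ) (hj : j < k + 1) :
    (polv v i).coeff j = coefV v i j := by
  unfold polv
  rw [finset_sum_coeff]
  rw [Finset.sum_eq_single j]
  · simp
  · intro b _ hbj
    rw [coeff_C_mul, coeff_X_pow, if_neg (fun hh => hbj hh.symm), mul_zero]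
  · intro hj'; exact absurd (Finset.mem_range.mpr hj) hj'

lemma modByMonic_hasseDeriv_block (q : ℕ) (hq : Fintype.card F = q) {k : ℕ} (hkq : k < q)
    {a : F[X]} (ha : a.degree ≤ (k : WithBot ℕ)) (i ℓ : ℕ) :
    (hasseDeriv ℓ (a * (X ^ q - X) ^ i)) %ₘ (X ^ q - X) = Spoly q i a ℓ := by
  have h2 : 2 ≤ q := by rw [← hq]; exact Fintype.one_lt_card
  have h1 : (hasseDeriv ℓ (a * (X ^ q - X) ^ i)) %ₘ (X ^ q - X)
      = (Spoly q i a ℓ) %ₘ (X ^ q - X) :=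
    modByMonic_eq_of_eval q hq fun α =>
      eval_hasseDeriv_mul_lam_pow q hq a i ℓ α
  rw [h1, (modByMonic_eq_self_iff (monic_lam q h2)).mpr]
  calc (Spoly q i a ℓ).degree ≤ (k : WithBot ℕ) := degree_Spoly_le q i ℓ ha
  _ < (q : WithBot ℕ) := by exact_mod_cast hkq
  _ = (X ^ q - X : F[X]).degree := (degree_lam q h2).symm

lemma pdeg_block_sum (q : ℕ) (hq : Fintype.card F = q) {k : ℕ} (hkq : k < q)
    (n : ℕ) (f : ℕ → F[X]) (hdeg : ∀ i, (f i).degree ≤ (k : WithBot ℕ)) (ℓ : ℕ) :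
    ((hasseDeriv ℓ (∑ i ∈ Finset.range n, f i * (X ^ q - X) ^ i)) %ₘ (X ^ q - X)).degree
      ≤ (k : WithBot ℕ) := by
  have heq : (hasseDeriv ℓ (∑ i ∈ Finset.range n, f i * (X ^ q - X) ^ i)) %ₘ (X ^ q - X)
      = ∑ i ∈ Finset.range n, Spoly q i (f i) ℓ := by
    rw [map_sum (hasseDeriv ℓ)]
    rw [show (∑ i ∈ Finset.range n, hasseDeriv ℓ (f i * (X ^ q - X) ^ i)) %ₘ (X ^ q - X)
        = ∑ i ∈ Finset.range n, (hasseDeriv ℓ (f i * (X ^ q - X) ^ i)) %ₘ (X ^ q - X) from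
      map_sum (modByMonicHom (X ^ q - X)) _ _]
    exact Finset.sum_congr rfl fun i _ =>
      modByMonic_hasseDeriv_block q hq hkq (hdeg i) i ℓ
  rw [heq]
  refine (degree_sum_le _ _).trans ?_
  rw [Finset.sup_le_iff]
  exact fun i _ => degree_Spoly_le q i ℓ (hdeg i)

lemma taylor_coeff_block_sum (q : ℕ) (hq : Fintype.card F = q)
    (n : ℕ) (f : ℕ → F[X]) (α : F) (j : ℕ) :
    (taylor α (∑ i ∈ Finset.range n, f i * (X ^ q - X) ^ i)).coeff j
      = (∑ i ∈ Finset.range n, Spoly q i (f i) j).eval α := by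
  rw [map_sum (taylor α), finset_sum_coeff, eval_finset_sum]
  refine Finset.sum_congr rfl fun i _ => ?_
  rw [taylor_coeff, eval_hasseDeriv_mul_lam_pow q hq (f i) i j α]

lemma taylor_coeff_Apoly (q : ℕ) (hq : Fintype.card F = q) {n k : ℕ}
    (v : Fin n → Fin (k + 1) → F) (α : F) (j : ℕ) :
    (taylor α (Apoly q v)).coeff j = (Ahat q v j).eval α :=
  taylor_coeff_block_sum q hq n (fun i => polv v i) α j

lemma taylor_coeff_H (q : ℕ) (hq : Fintype.card F = q) {n k : ℕ}
    (va vb : Fin n → Fin (k + 1) → F) (Fp Gp : F[X]) (U W : ℕ → F[X])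
    (r₁ r₂ : F → F) (M : ℕ)
    (hU : ∀ m < M, ∀ α : F, (hasseDeriv m Fp).eval α = r₁ α * (U m).eval α)
    (hW : ∀ m < M, ∀ α : F, (hasseDeriv m Gp).eval α = r₂ α * (W m).eval α)
    (α : F) (ℓ : ℕ) (hℓ : ℓ < M) (hr : r₁ α = r₂ α) :
    (taylor α (Apoly q va * Fp - Apoly q vb * Gp)).coeff ℓ
      = r₁ α * (Rpoly q U W va vb ℓ).eval α := by
  rw [map_sub, coeff_sub, taylor_mul, taylor_mul, coeff_mul, coeff_mul]
  rw [Rpoly, eval_finset_sum, Finset.mul_sum, ← Finset.sum_sub_distrib]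
  refine Finset.sum_congr rfl fun p hp => ?_
  have hp2 : p.2 < M := by
    have := Finset.HasAntidiagonal.mem_antidiagonal.mp hp
    omega
  rw [taylor_coeff_Apoly q hq va, taylor_coeff_Apoly q hq vb,
    taylor_coeff, taylor_coeff, hU p.2 hp2 α, hW p.2 hp2 α,
    eval_sub, eval_mul, eval_mul]
  rw [hr]
  ring

lemma degree_Ahat_le (q : ℕ) {n k : ℕ} (v : Fin n → Fin (k + 1) → F) (j : ℕ) :
    (Ahat q v j).degree ≤ (k : WithBot ℕ) := by
  refine (degree_sum_le _ _).trans ?_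
  rw [Finset.sup_le_iff]
  exact fun i _ => degree_Spoly_le q i j (degree_polv_le v i)

lemma degree_Rpoly_le (q : ℕ) {n k : ℕ} (U W : ℕ → F[X]) {h : ℕ}
    (hU : ∀ m, (U m).degree ≤ (h : WithBot ℕ)) (hW : ∀ m, (W m).degree ≤ (h : WithBot ℕ))
    (v w : Fin n → Fin (k + 1) → F) (ℓ : ℕ) :
    (Rpoly q U W v w ℓ).degree ≤ ((k + h : ℕ) : WithBot ℕ) := by
  refine (degree_sum_le _ _).trans ?_
  rw [Finset.sup_le_iff]
  intro p _
  refine (degree_sub_le _ _).trans ?_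
  rw [max_le_iff]
  constructor <;>
  · refine (degree_mul_le _ _).trans ?_
    refine le_trans (add_le_add (degree_Ahat_le q _ p.1) (by first | exact hU p.2 | exact hW p.2)) ?_
    rw [← Nat.cast_add]

lemma degree_lam_pow_le (q i : ℕ) (h2 : 2 ≤ q) :
    ((X ^ q - X : F[X]) ^ i).degree ≤ ((i * q : ℕ) : WithBot ℕ) := by
  induction i with
  | zero => simpa using degree_one_le
  | succ m ih =>
    rw [pow_succ]
    refine (degree_mul_le _ _).trans ?_
    refine le_trans (add_le_add ih (degree_lam q h2).le) ?_
    rw [← Nat.cast_add]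
    exact_mod_cast le_of_eq (by ring)

lemma degree_Apoly_lt {n k : ℕ} (q T a bb : ℕ) (hn : n = a + 1)
    (v : Fin n → Fin (k + 1) → F)
    (htop : ∀ j : ℕ, bb ≤ j → j < k + 1 → coefV v a j = 0)
    (hkq : k < q) (h2 : 2 ≤ q) (ha1 : 1 ≤ a)
    (haqT : a * q ≤ T) (hbbT : a * q + bb ≤ T) :
    (Apoly q v).degree < (T : WithBot ℕ) := by
  have hT1 : 1 ≤ T := le_trans (by nlinarith) haqT
  unfold Apoly
  refine lt_of_le_of_lt (degree_sum_le _ _) ?_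
  rw [Finset.sup_lt_iff (by exact_mod_cast WithBot.bot_lt_coe T)]
  intro i hi
  rw [Finset.mem_range, hn] at hi
  rcases Nat.lt_succ_iff_lt_or_eq.mp hi with hia | rfl
  · refine lt_of_le_of_lt (degree_mul_le _ _) ?_
    refine lt_of_le_of_lt (add_le_add (degree_polv_le v i) (degree_lam_pow_le q i h2)) ?_
    rw [← Nat.cast_add]
    have hiq : i * q ≤ (a - 1) * q := Nat.mul_le_mul_right q (by omega)
    have haq : (a - 1) * q + q = a * q := by
      have h' : a - 1 + 1 = a := by omega
      calc (a - 1) * q + q = (a - 1 + 1) * q := by ring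
      _ = a * q := by rw [h']
    exact_mod_cast (by omega : k + i * q < T)
  · by_cases hz : polv v i = 0
    · rw [hz, zero_mul, degree_zero]
      exact_mod_cast WithBot.bot_lt_coe T
    · have hdlt : (polv v i).degree < (bb : WithBot ℕ) := by
        rw [degree_lt_iff_coeff_zero]
        intro m hm
        have hbm : bb ≤ m := by exact_mod_cast hm
        rcases Nat.lt_or_ge m (k + 1) with hmk | hmk
        · rw [polv_coeff v i m hmk]; exact htop m hbm hmk
        · refine coeff_eq_zero_of_degree_lt (lt_of_le_of_lt (degree_polv_le v i) ?_)
          exact_mod_cast hmk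
      have hbb1 : 1 ≤ bb := by
        by_contra hbb
        have hbb0 : bb = 0 := by omega
        rw [hbb0, Nat.cast_zero] at hdlt
        exact hz (degree_eq_bot.mp (Nat.WithBot.lt_zero_iff.mp hdlt))
      have hdle : (polv v i).degree ≤ ((bb - 1 : ℕ) : WithBot ℕ) := by
        have := (natDegree_lt_iff_degree_lt hz).mpr hdlt
        rw [degree_eq_natDegree hz]
        exact_mod_cast (by omega : (polv v i).natDegree ≤ bb - 1)
      refine lt_of_le_of_lt (degree_mul_le _ _) ?_
      refine lt_of_le_of_lt (add_le_add hdle (degree_lam_pow_le q i h2)) ?_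
      rw [← Nat.cast_add]
      exact_mod_cast (by omega : bb - 1 + i * q < T)

noncomputable def PhiFun (q : ℕ) {n k : ℕ} (M hh bb a : ℕ) (han : a < n) (hbk : bb ≤ k + 1)
    (U W : ℕ → F[X]) (vw : (Fin n → Fin (k + 1) → F) × (Fin n → Fin (k + 1) → F)) :
    (Fin M → Fin (k + hh + 1) → F) × ((Fin (k + 1 - bb) → F) × (Fin (k + 1 - bb) → F)) :=
  ( fun ℓ s => (Rpoly q U W vw.1 vw.2 ℓ).coeff s,
    fun j => vw.1 ⟨a, han⟩ ⟨bb + j.val, by have := j.isLt; omega⟩,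
    fun j => vw.2 ⟨a, han⟩ ⟨bb + j.val, by have := j.isLt; omega⟩ )

lemma PhiFun_linear (q : ℕ) {n k : ℕ} (M hh bb a : ℕ) (han : a < n) (hbk : bb ≤ k + 1)
    (U W : ℕ → F[X]) : IsLinearMap F (PhiFun (F := F) q M hh bb a han hbk U W) := by
  constructor
  · intro x y
    unfold PhiFun
    refine Prod.ext ?_ (Prod.ext ?_ ?_)
    · funext ℓ s
      simp only [Prod.fst_add, Prod.snd_add, Rpoly_add, coeff_add]
      rfl
    · funext j; simp
    · funext j; simp
  · intro c x
    unfold PhiFun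
    refine Prod.ext ?_ (Prod.ext ?_ ?_)
    · funext ℓ s
      simp only [Prod.smul_fst, Prod.smul_snd, Rpoly_smul, coeff_smul]
      rfl
    · funext j; simp
    · funext j; simp

lemma exists_ker {K V W : Type*} [Field K] [AddCommGroup V] [Module K V]
    [AddCommGroup W] [Module K W] [FiniteDimensional K V] [FiniteDimensional K W]
    (f : V →ₗ[K] W) (h : finrank K W < finrank K V) :
    ∃ v : V, v ≠ 0 ∧ f v = 0 := by
  by_contra hcon
  push_neg at hcon
  have hker : LinearMap.ker f = ⊥ := by
    rw [Submodule.eq_bot_iff]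
    intro x hx
    by_contra hx0
    exact absurd (LinearMap.mem_ker.mp hx) (hcon x hx0)
  have hinj : Function.Injective f := LinearMap.ker_eq_bot.mp hker
  exact absurd (LinearMap.finrank_le_finrank_of_injective hinj) (Nat.not_le.mpr h)

lemma count_lemma (q k M c h a b T : ℕ) (u D : ℝ)
    (hq2 : 2 ≤ q) (hk1 : 1 ≤ k) (hkq : k < q) (ha1 : 1 ≤ a)
    (hab : a * q + b = T) (hb : b < q)
    (hTu : (T : ℝ) ≤ u * q) (huT : u * q < (T : ℝ) + 1)
    (huD : 2 * u = D + M)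
    (hmain : (M : ℝ) * (h + 1) < k * D) :
    M * (k + h + 1) < 2 * (a * (k + 1) + min (k + 1) b) := by
  have hq0 : (0 : ℝ) < q := by positivity
  have hk0 : (0 : ℝ) < k := by exact_mod_cast hk1
  have key : (M : ℝ) * (k + h + 1) < 2 * u * k := by nlinarith
  have hub : u * q < (a : ℝ) * q + b + 1 := by
    have : ((a * q + b : ℕ) : ℝ) = (T : ℝ) := by exact_mod_cast hab
    push_cast at this
    linarith
  have hkr : (k : ℝ) + 1 ≤ q := by exact_mod_cast hkq
  have har : (1 : ℝ) ≤ a := by exact_mod_cast ha1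
  have hbr : (b : ℝ) + 1 ≤ q := by exact_mod_cast hb
  rcases le_or_gt b (k + 1) with hcase | hcase
  · have hmin : min (k + 1) b = b := min_eq_right hcase
    rw [hmin]
    rcases Nat.lt_or_ge b (k + 1) with hbk | hbk
    · have hbkr : (b : ℝ) ≤ k := by exact_mod_cast Nat.lt_succ_iff.mp hbk
      have goal_r : (M : ℝ) * (k + h + 1) < 2 * (a * (k + 1) + b) := by
        have h1 : 2 * u * k * q < 2 * k * ((a : ℝ) * q + b + 1) := by nlinarith
        have h2 : 2 * (k : ℝ) * ((a : ℝ) * q + b + 1) ≤ (2 * ((a:ℝ) * (k + 1) + b)) * q := by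
          nlinarith
        have h3 : (M : ℝ) * (k + h + 1) * q < (2 * ((a:ℝ) * (k + 1) + b)) * q := by
          nlinarith
        have := (mul_lt_mul_iff_left₀ hq0).mp h3
        linarith
      exact_mod_cast goal_r
    · have hbe : b = k + 1 := le_antisymm hcase hbk
      subst hbe
      push_cast at hub hbr
      have goal_r : (M : ℝ) * (k + h + 1) < 2 * (a * (k + 1) + (k + 1)) := by
        have h1 : 2 * u * k * q < 2 * k * ((a : ℝ) * q + (k + 1) + 1) := by nlinarith
        have h2 : 2 * (k : ℝ) * ((a : ℝ) * q + (k+1) + 1) ≤ (2 * ((a:ℝ) * (k + 1) + (k+1))) * q := by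
          nlinarith
        have h3 : (M : ℝ) * (k + h + 1) * q < (2 * ((a:ℝ) * (k + 1) + (k+1))) * q := by nlinarith
        have := (mul_lt_mul_iff_left₀ hq0).mp h3
        linarith
      exact_mod_cast goal_r
  · have hmin : min (k + 1) b = k + 1 := min_eq_left (le_of_lt hcase)
    rw [hmin]
    have hbk : (k : ℝ) + 1 < b := by exact_mod_cast hcase
    have goal_r : (M : ℝ) * (k + h + 1) < 2 * (a * (k + 1) + (k + 1)) := by
      have h1 : 2 * u * k * q < 2 * k * ((a : ℝ) * q + b + 1) := by nlinarith
      have h2 : 2 * (k : ℝ) * ((a : ℝ) * q + b + 1) ≤ (2 * ((a:ℝ) * (k + 1) + (k+1))) * q := by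
        nlinarith
      have h3 : (M : ℝ) * (k + h + 1) * q < (2 * ((a:ℝ) * (k + 1) + (k+1))) * q := by nlinarith
      have := (mul_lt_mul_iff_left₀ hq0).mp h3
      linarith
    exact_mod_cast goal_r

lemma pdegLE_all (q k : ℕ) (h2 : 2 ≤ q) (hk : q - 1 ≤ k) (P : F[X]) : PdegLE q P k := by
  intro ℓ
  have hdeg := degree_modByMonic_lt (hasseDeriv ℓ P) (monic_lam (F := F) q h2)
  rw [degree_lam q h2] at hdeg
  set R := hasseDeriv ℓ P %ₘ (X ^ q - X) with hR
  by_cases hz : R = 0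
  · rw [hz]; simp
  · rw [degree_eq_natDegree hz]
    have := (natDegree_lt_iff_degree_lt hz).mpr hdeg
    exact_mod_cast (by omega : R.natDegree ≤ k)

lemma pdegLE_of_degree_le (q k : ℕ) (h2 : 2 ≤ q) {P : F[X]}
    (hP : P.degree ≤ (k : WithBot ℕ)) : PdegLE q P k := by
  rcases Nat.lt_or_ge k q with hkq | hkq
  · intro ℓ
    have hd : (hasseDeriv ℓ P).degree ≤ (k : WithBot ℕ) := by
      rw [degree_le_iff_coeff_zero] at hP ⊢
      intro m hm
      rw [hasseDeriv_coeff]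
      have : P.coeff (m + ℓ) = 0 := hP (m + ℓ) (by
        refine lt_of_lt_of_le hm ?_
        exact_mod_cast Nat.le_add_right m ℓ)
      simp [this]
    rw [(modByMonic_eq_self_iff (monic_lam q h2)).mpr]
    · exact hd
    · rw [degree_lam q h2]
      exact lt_of_le_of_lt hd (by exact_mod_cast hkq)
  · exact pdegLE_all q k h2 (by omega) P

end Stmt16Aux

set_option maxHeartbeats 1600000

open Stmt16Aux Finset Module

/-- **robust version.** Let `c, h, M` be positive, `γ ∈ [0,1)` with
`c < (1-2γ)·M/2`, and `r₁, r₂ : 𝔽_q → 𝔽_q` with `Δ(r₁, r₂) ≤ γq`. Let `F, G ∈ 𝔽_q[X]`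
of degree `< cq` be, respectively, `r₁`-twisted and `r₂`-twisted `(h, M)`-pseudopolynomials,
and let `k > (M/((1-2γ)M - 2c))·(h+1)`. Then there exist `A, B ∈ 𝔽_q[X]`, not both zero,
each of degree `< Mq` and pseudodegree at most `k`, with `A·F = B·G`. -/
theorem stmt16 {F : Type*} [Field F] [Fintype F] (q : ℕ) (hq : Fintype.card F = q)
    (c h M : ℕ) (hc : 0 < c) (hh : 0 < h) (hM : 0 < M)
    (γ : ℝ) (hγ0 : 0 ≤ γ) (hγ1 : γ < 1)
    (hcM : (c : ℝ) < (1 - 2 * γ) * (M : ℝ) / 2)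
    (r₁ r₂ : F → F)
    (hΔ : ({α : F | r₁ α ≠ r₂ α}.ncard : ℝ) ≤ γ * (q : ℝ))
    (Fp Gp : F[X])
    (hFdeg : Fp.degree < ((c * q : ℕ) : WithBot ℕ))
    (hGdeg : Gp.degree < ((c * q : ℕ) : WithBot ℕ))
    (hFtw : Twisted r₁ h M Fp) (hGtw : Twisted r₂ h M Gp)
    (k : ℕ)
    (hk : (M : ℝ) / ((1 - 2 * γ) * (M : ℝ) - 2 * (c : ℝ)) * ((h : ℝ) + 1) < (k : ℝ)) :
    ∃ A B : F[X], ¬(A = 0 ∧ B = 0) ∧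
      A.degree < ((M * q : ℕ) : WithBot ℕ) ∧ B.degree < ((M * q : ℕ) : WithBot ℕ) ∧
      PdegLE q A k ∧ PdegLE q B k ∧
      A * Fp = B * Gp := by
  classical
  have h2 : 2 ≤ q := by rw [← hq]; exact Fintype.one_lt_card
  have hMq1 : 0 < M * q := Nat.mul_pos hM (by omega)
  have pdeg0 : PdegLE q (0 : F[X]) k := pdegLE_of_degree_le q k h2 (by simp)
  have pdeg1 : PdegLE q (1 : F[X]) k := pdegLE_of_degree_le q k h2 (by
    rw [degree_one]; exact_mod_cast Nat.zero_le k)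
  by_cases hFz : Fp = 0
  · refine ⟨1, 0, by simp, ?_, ?_, pdeg1, pdeg0, by rw [hFz]; ring⟩
    · rw [degree_one]; exact_mod_cast hMq1
    · rw [degree_zero]; exact WithBot.bot_lt_coe _
  by_cases hGz : Gp = 0
  · refine ⟨0, 1, by simp, ?_, ?_, pdeg0, pdeg1, by rw [hGz]; ring⟩
    · rw [degree_zero]; exact WithBot.bot_lt_coe _
    · rw [degree_one]; exact_mod_cast hMq1
  have hD : (0 : ℝ) < (1 - 2 * γ) * (M : ℝ) - 2 * c := by linarith
  have hc1 : (1 : ℝ) ≤ c := by exact_mod_cast hc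
  have hM3 : 3 ≤ M := by
    have hg : (1 - 2 * γ) * (M : ℝ) ≤ M := by nlinarith [Nat.cast_nonneg (α := ℝ) M]
    have : (2 : ℝ) < M := by nlinarith
    have : 2 < M := by exact_mod_cast this
    omega
  have hk1 : 1 ≤ k := by
    have hpos : (0 : ℝ) < (M : ℝ) / ((1 - 2 * γ) * (M : ℝ) - 2 * c) * ((h : ℝ) + 1) := by
      apply mul_pos (div_pos (by exact_mod_cast hM) hD)
      positivity
    have : (0 : ℝ) < k := lt_trans hpos hk
    have : 0 < k := by exact_mod_cast this
    omega
  have hmain : (M : ℝ) * ((h : ℝ) + 1) < (k : ℝ) * ((1 - 2 * γ) * (M : ℝ) - 2 * c) := by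
    rw [div_mul_eq_mul_div, div_lt_iff₀ hD] at hk
    linarith
  by_cases hkbig : q - 1 ≤ k
  · have hcMlt : c ≤ M := by
      have h1 : (c : ℝ) < M := by nlinarith [Nat.cast_nonneg (α := ℝ) M]
      have : c < M := by exact_mod_cast h1
      omega
    refine ⟨Gp, Fp, ?_, ?_, ?_, pdegLE_all q k h2 hkbig Gp, pdegLE_all q k h2 hkbig Fp,
      mul_comm Gp Fp⟩
    · rintro ⟨hA, _⟩; exact hGz hA
    · exact lt_of_lt_of_le hGdeg (by exact_mod_cast Nat.mul_le_mul_right q hcMlt)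
    · exact lt_of_lt_of_le hFdeg (by exact_mod_cast Nat.mul_le_mul_right q hcMlt)
  have hkq : k < q := by omega
  set u : ℝ := (1 - γ) * (M : ℝ) - c with hu_def
  have h2u : 2 * u = ((1 - 2 * γ) * (M : ℝ) - 2 * c) + M := by rw [hu_def]; ring
  have hu_pos : 0 < u := by
    have : (0 : ℝ) ≤ M := Nat.cast_nonneg M
    linarith
  have huM : u ≤ (M : ℝ) - 1 := by
    have : 0 ≤ γ * M := by positivity
    rw [hu_def]; linarith
  have huhalf : (M : ℝ) / 2 < u := by linarith
  set T := ⌊u * q⌋₊ with hT_def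
  have hq0r : (0 : ℝ) < q := by positivity
  have hTu : (T : ℝ) ≤ u * q := Nat.floor_le (by positivity)
  have huT : u * q < (T : ℝ) + 1 := Nat.lt_floor_add_one _
  have hqT : q ≤ T := by
    apply Nat.le_floor
    have h3M : (3 : ℝ) ≤ M := by exact_mod_cast hM3
    have hu32 : (3 : ℝ) / 2 ≤ u := by linarith
    nlinarith
  have hTMq : T ≤ (M - 1) * q := by
    have hcast : (((M - 1) * q : ℕ) : ℝ) = ((M : ℝ) - 1) * q := by
      push_cast [Nat.cast_sub (by omega : 1 ≤ M)]
      ring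
    have hTle : (T : ℝ) ≤ (((M - 1) * q : ℕ) : ℝ) := by
      rw [hcast]
      nlinarith
    exact_mod_cast hTle
  set a := T / q with ha_def
  set b := T % q with hb_def
  have hab : a * q + b = T := by
    rw [ha_def, hb_def, Nat.mul_comm (T / q) q]
    exact Nat.div_add_mod T q
  have hb_lt : b < q := Nat.mod_lt _ (by omega)
  have ha1 : 1 ≤ a := (Nat.one_le_div_iff (by omega)).mpr hqT
  have haM : a + 1 ≤ M := by
    have haM1 : a ≤ M - 1 := by
      rw [ha_def]
      calc T / q ≤ ((M - 1) * q) / q := Nat.div_le_div_right hTMq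
      _ = M - 1 := Nat.mul_div_cancel _ (by omega)
    omega
  set bb := min (k + 1) b with hbb_def
  have hcount := count_lemma q k M c h a b T u ((1 - 2 * γ) * (M : ℝ) - 2 * c)
    h2 hk1 hkq ha1 hab hb_lt hTu huT (by linarith) hmain
  -- witnesses
  have hUex : ∀ m : ℕ, ∃ uu : F[X], uu.degree ≤ (h : WithBot ℕ) ∧
      (m < M → ∀ α : F, (hasseDeriv m Fp).eval α = r₁ α * uu.eval α) := by
    intro m
    by_cases hm : m < M
    · obtain ⟨uu, h1, h2'⟩ := hFtw m hm; exact ⟨uu, h1, fun _ => h2'⟩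
    · exact ⟨0, by simp, fun hcc => absurd hcc hm⟩
  choose U hUdeg hUev using hUex
  have hWex : ∀ m : ℕ, ∃ uu : F[X], uu.degree ≤ (h : WithBot ℕ) ∧
      (m < M → ∀ α : F, (hasseDeriv m Gp).eval α = r₂ α * uu.eval α) := by
    intro m
    by_cases hm : m < M
    · obtain ⟨uu, h1, h2'⟩ := hGtw m hm; exact ⟨uu, h1, fun _ => h2'⟩
    · exact ⟨0, by simp, fun hcc => absurd hcc hm⟩
  choose W hWdeg hWev using hWex
  set n := a + 1 with hn_def
  have han : a < n := by omega
  have hbk : bb ≤ k + 1 := min_le_left _ _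
  let φl : ((Fin n → Fin (k + 1) → F) × (Fin n → Fin (k + 1) → F)) →ₗ[F]
      ((Fin M → Fin (k + h + 1) → F) × ((Fin (k + 1 - bb) → F) × (Fin (k + 1 - bb) → F))) :=
    IsLinearMap.mk' _ (PhiFun_linear q M h bb a han hbk U W)
  have hfr1 : ∀ (m r : ℕ), finrank F (Fin m → Fin r → F) = m * r := by
    intro m r
    rw [finrank_pi_fintype]
    simp [finrank_fintype_fun_eq_card]
  have hrank : finrank F ((Fin M → Fin (k + h + 1) → F) ×
      ((Fin (k + 1 - bb) → F) × (Fin (k + 1 - bb) → F)))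
      < finrank F ((Fin n → Fin (k + 1) → F) × (Fin n → Fin (k + 1) → F)) := by
    simp only [finrank_prod, hfr1, finrank_fintype_fun_eq_card, Fintype.card_fin]
    have hexp : n * (k + 1) = a * (k + 1) + (k + 1) := by rw [hn_def]; ring
    omega
  obtain ⟨v, hv0, hvker⟩ := exists_ker φl hrank
  have hPhi : PhiFun (F := F) q M h bb a han hbk U W v = 0 := by
    have : φl v = PhiFun (F := F) q M h bb a han hbk U W v := rfl
    rw [← this]; exact hvker
  have hR0 : ∀ (ℓ : Fin M) (s : Fin (k + h + 1)), (Rpoly q U W v.1 v.2 ℓ).coeff s = 0 := by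
    intro ℓ s
    have := congrFun (congrFun (congrArg Prod.fst hPhi) ℓ) s
    simpa [PhiFun] using this
  have htopa : ∀ j : ℕ, bb ≤ j → j < k + 1 → coefV v.1 a j = 0 := by
    intro j hj1 hj2
    have hjj : j - bb < k + 1 - bb := by omega
    have hcomp := congrFun (congrArg (fun z => z.2.1) hPhi) ⟨j - bb, hjj⟩
    simp only [PhiFun, Pi.zero_apply, Prod.snd_zero, Prod.fst_zero] at hcomp
    rw [coefV, dif_pos ⟨han, hj2⟩]
    have hidx : bb + (j - bb) = j := by omega
    convert hcomp using 3
    omega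
  have htopb : ∀ j : ℕ, bb ≤ j → j < k + 1 → coefV v.2 a j = 0 := by
    intro j hj1 hj2
    have hjj : j - bb < k + 1 - bb := by omega
    have hcomp := congrFun (congrArg (fun z => z.2.2) hPhi) ⟨j - bb, hjj⟩
    simp only [PhiFun, Pi.zero_apply, Prod.snd_zero, Prod.fst_zero] at hcomp
    rw [coefV, dif_pos ⟨han, hj2⟩]
    convert hcomp using 3
    omega
  have hRz : ∀ ℓ, ℓ < M → Rpoly q U W v.1 v.2 ℓ = 0 := by
    intro ℓ hℓ
    apply Polynomial.ext
    intro s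
    rw [coeff_zero]
    rcases Nat.lt_or_ge s (k + h + 1) with hs | hs
    · exact hR0 ⟨ℓ, hℓ⟩ ⟨s, hs⟩
    · refine coeff_eq_zero_of_degree_lt (lt_of_le_of_lt
        (degree_Rpoly_le q U W hUdeg hWdeg v.1 v.2 ℓ) ?_)
      exact_mod_cast (by omega : k + h < s)
  set A := Apoly q v.1 with hA_def
  set B := Apoly q v.2 with hB_def
  have hdegA : A.degree < (T : WithBot ℕ) :=
    degree_Apoly_lt q T a bb hn_def v.1 htopa hkq h2 ha1 (by omega) (by omega)
  have hdegB : B.degree < (T : WithBot ℕ) :=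
    degree_Apoly_lt q T a bb hn_def v.2 htopb hkq h2 ha1 (by omega) (by omega)
  have hTMq2 : T < M * q := by
    have he : (a + 1) * q = a * q + q := by ring
    have : (a + 1) * q ≤ M * q := Nat.mul_le_mul_right q haM
    omega
  have hHdvd : ∀ α : F, r₁ α = r₂ α → (X - C α) ^ M ∣ (A * Fp - B * Gp) := by
    intro α hr
    apply pow_X_sub_C_dvd
    intro ℓ hℓ
    rw [hA_def, hB_def,
      taylor_coeff_H q hq v.1 v.2 Fp Gp U W r₁ r₂ M hUev hWev α ℓ hℓ hr, hRz ℓ hℓ]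
    simp
  have hH0 : A * Fp - B * Gp = 0 := by
    by_contra hne
    set Wfin : Finset F := Finset.univ.filter (fun α => r₁ α = r₂ α) with hWfin
    have hdvd : (∏ α ∈ Wfin, (X - C α) ^ M) ∣ (A * Fp - B * Gp) := by
      apply Finset.prod_dvd_of_coprime
      · intro x hx y hy hxy
        exact (Polynomial.pairwise_coprime_X_sub_C Function.injective_id hxy).pow
      · intro α hα
        exact hHdvd α (by simpa [hWfin] using hα)
    have hdegP : (∏ α ∈ Wfin, (X - C α) ^ M).natDegree = M * Wfin.card := by
      rw [natDegree_prod _ _ (fun α _ => pow_ne_zero M (X_sub_C_ne_zero α))]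
      simp [natDegree_pow, natDegree_X_sub_C, mul_comm]
    have hle := natDegree_le_natDegree (degree_le_of_dvd hdvd hne)
    rw [hdegP] at hle
    have hT1 : 1 ≤ T := by omega
    have hcq1 : 1 ≤ c * q := by
      have : 0 < c * q := Nat.mul_pos hc (by omega)
      omega
    have hndA : A.natDegree ≤ T - 1 := by
      by_cases hz : A = 0
      · rw [hz, natDegree_zero]; omega
      · have := (natDegree_lt_iff_degree_lt hz).mpr hdegA
        omega
    have hndB : B.natDegree ≤ T - 1 := by
      by_cases hz : B = 0
      · rw [hz, natDegree_zero]; omega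
      · have := (natDegree_lt_iff_degree_lt hz).mpr hdegB
        omega
    have hndF : Fp.natDegree ≤ c * q - 1 := by
      have := (natDegree_lt_iff_degree_lt hFz).mpr hFdeg
      omega
    have hndG : Gp.natDegree ≤ c * q - 1 := by
      have := (natDegree_lt_iff_degree_lt hGz).mpr hGdeg
      omega
    have hndH : (A * Fp - B * Gp).natDegree ≤ (T - 1) + (c * q - 1) := by
      refine le_trans (natDegree_sub_le _ _) (max_le ?_ ?_)
      · exact le_trans natDegree_mul_le (add_le_add hndA hndF)
      · exact le_trans natDegree_mul_le (add_le_add hndB hndG)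
    -- cardinalities
    have hcardW : Wfin.card + ({α : F | r₁ α ≠ r₂ α}).ncard = q := by
      have hn1 : ({α : F | r₁ α ≠ r₂ α}).ncard
          = (Finset.univ.filter (fun α : F => ¬ (r₁ α = r₂ α))).card := by
        rw [Set.ncard_eq_toFinset_card']
        congr 1
        ext x
        simp
      rw [hn1, hWfin]
      rw [Finset.card_filter_add_card_filter_not]
      rw [Finset.card_univ, hq]
    -- real contradiction
    have hMle := le_trans hle hndH
    have hcast1 : ((T - 1) + (c * q - 1) : ℕ) = T + c * q - 2 := by omega
    have hreal1 : ((M * Wfin.card : ℕ) : ℝ) ≤ (T : ℝ) + (c * q : ℕ) - 2 := by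
      rw [hcast1] at hMle
      have : ((M * Wfin.card : ℕ) : ℝ) ≤ ((T + c * q - 2 : ℕ) : ℝ) := by exact_mod_cast hMle
      refine le_trans this ?_
      push_cast [Nat.cast_sub (by omega : 2 ≤ T + c * q)]
      ring_nf
      exact le_refl _
    have hcardr : (q : ℝ) - γ * q ≤ (Wfin.card : ℝ) := by
      have h1 : ((Wfin.card : ℕ) : ℝ) = (q : ℝ) - (({α : F | r₁ α ≠ r₂ α}).ncard : ℝ) := by
        have := hcardW
        push_cast [← this]
        ring
      rw [h1]
      linarith
    have hMr : (0 : ℝ) ≤ M := Nat.cast_nonneg M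
    have huq : u * q + (c * q : ℕ) = (M : ℝ) * ((q : ℝ) - γ * q) := by
      push_cast
      rw [hu_def]
      ring
    have hfinal : (M : ℝ) * ((q : ℝ) - γ * q) ≤ ((M * Wfin.card : ℕ) : ℝ) := by
      push_cast
      exact mul_le_mul_of_nonneg_left hcardr hMr
    linarith
  refine ⟨A, B, ?_, ?_, ?_, ?_, ?_, sub_eq_zero.mp hH0⟩
  · rintro ⟨hA0, hB0⟩
    apply hv0
    have hkey : ∀ (w : Fin n → Fin (k + 1) → F), Apoly q w = 0 → w = 0 := by
      intro w hw
      have hz := blocks_zero q h2 n (fun i => polv w i)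
        (fun i => lt_of_le_of_lt (degree_polv_le w i) (by exact_mod_cast hkq)) hw
      funext i j
      have h1 : polv w i.val = 0 := hz i.val i.isLt
      have h3 := polv_coeff w i.val j.val j.isLt
      rw [h1, coeff_zero] at h3
      rw [coefV, dif_pos ⟨i.isLt, j.isLt⟩] at h3
      simpa using h3.symm
    have hva : v.1 = 0 := hkey v.1 hA0
    have hvb : v.2 = 0 := hkey v.2 hB0
    exact Prod.ext hva hvb
  · exact lt_of_lt_of_le hdegA (by exact_mod_cast le_of_lt hTMq2)
  · exact lt_of_lt_of_le hdegB (by exact_mod_cast le_of_lt hTMq2)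
  · intro ℓ
    rw [hA_def]
    exact pdeg_block_sum q hq hkq n (fun i => polv v.1 i) (fun i => degree_polv_le v.1 i) ℓ
  · intro ℓ
    rw [hB_def]
    exact pdeg_block_sum q hq hkq n (fun i => polv v.2 i) (fun i => degree_polv_le v.2 i) ℓ
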